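/- Let α, β, γ, c be real numbers with α > 0, γ < 0, β + c > 0, and take A = 0 in the system (★). Let (φ, ψ) : ℝ → ℝ² be a nonconstant solution of (★) with lim_{y→±∞} φ(y) = 0 and lim_{y→±∞} ψ(y) = 0, and let y₀ ∈ ℝ be the unique point with φ(y₀) = −3(β+c)/γ and ψ(y₀) = 0. Then φ(y) > 0 for all y ∈ ℝ, φ is strictly increasing on (−∞, y₀), and φ is strictly decreasing on (y₀, ∞). -/

import Mathlib

open Set Filter

/-- Grönwall-type uniqueness: if `|f'| ≤ K |f|` on `[a,b]` and `f a = 0` then `f ≡ 0`. -/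
lemma gron_zero (K : ℝ) (f g : ℝ → ℝ) (hf : ∀ x, HasDerivAt f (g x) x)
    (a b : ℝ) (hb : ∀ x ∈ Set.Icc a b, |g x| ≤ K * |f x|) (ha : f a = 0) :
    ∀ x ∈ Set.Icc a b, f x = 0 := by
  intro x hx
  have hcont : Continuous f := by
    apply continuous_iff_continuousAt.2
    exact fun y => (hf y).continuousAt
  have h := norm_le_gronwallBound_of_norm_deriv_right_le (f := f) (f' := g)
      (δ := 0) (K := K) (ε := 0) (a := a) (b := b)
      hcont.continuousOn
      (fun y _ => (hf y).hasDerivWithinAt)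
      (by simp [ha])
      (fun y hy => by
        simpa [Real.norm_eq_abs] using hb y (Set.Ico_subset_Icc_self hy))
      x hx
  have hbnd : gronwallBound 0 K 0 (x - a) = 0 := by
    by_cases hK : K = 0
    · simp [gronwallBound, hK]
    · simp [gronwallBound, hK]
  rw [hbnd] at h
  simpa using le_antisymm h (norm_nonneg _)

/-- Two-sided version, centered at `t₀`. -/
lemma gron_zero_two_sided (K : ℝ) (f g : ℝ → ℝ) (hf : ∀ x, HasDerivAt f (g x) x)
    (t₀ δ : ℝ) (hb : ∀ x ∈ Set.Icc (t₀ - δ) (t₀ + δ), |g x| ≤ K * |f x|)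
    (ha : f t₀ = 0) :
    ∀ x ∈ Set.Icc (t₀ - δ) (t₀ + δ), f x = 0 := by
  intro x hx
  rcases le_or_gt t₀ x with hle | hlt
  · exact gron_zero K f g hf t₀ (t₀ + δ) (fun z hz => hb z ⟨by linarith [hz.1, hx.1, hx.2], hz.2⟩) ha x
      ⟨hle, hx.2⟩
  · -- backward: reflect
    have hf' : ∀ t, HasDerivAt (fun t => f (2 * t₀ - t)) (-(g (2 * t₀ - t))) t := by
      intro t
      have h1 : HasDerivAt (fun t : ℝ => 2 * t₀ - t) (-1) t := by
        simpa using (hasDerivAt_id t).const_sub (2 * t₀)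
      have := (hf (2 * t₀ - t)).comp t h1
      simpa [mul_comm, Function.comp_def] using this
    have key := gron_zero K (fun t => f (2 * t₀ - t)) (fun t => -(g (2 * t₀ - t))) hf'
        t₀ (t₀ + δ)
        (fun z hz => by
          have hz' : 2 * t₀ - z ∈ Set.Icc (t₀ - δ) (t₀ + δ) := by
            constructor <;> linarith [hz.1, hz.2]
          simpa [abs_neg] using hb _ hz')
        (by show f (2 * t₀ - t₀) = 0; rw [show 2 * t₀ - t₀ = t₀ by ring]; exact ha)
        (2 * t₀ - x) ⟨by linarith [hx.2], by linarith [hx.1]⟩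
    have key' : f (2 * t₀ - (2 * t₀ - x)) = 0 := key
    rwa [show 2 * t₀ - (2 * t₀ - x) = x by ring] at key'

set_option maxHeartbeats 1000000 in
/-- For the system (★) with `A = 0` and `γ < 0`, along the nonconstant
solution with `φ, ψ → 0` at `±∞` and `φ(y₀) = −3(β+c)/γ`, `ψ(y₀) = 0`, the profile `φ`
is everywhere positive, strictly increasing on `(−∞, y₀)` and strictly decreasing on
`(y₀, ∞)`. -/
theorem stmt_10 (α β γ c : ℝ) (hα : 0 < α) (hγ : γ < 0) (hβc : 0 < β + c)
    (φ ψ : ℝ → ℝ)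
    (hφ : ∀ y : ℝ, HasDerivAt φ (ψ y) y)
    (hψ : ∀ y : ℝ, HasDerivAt ψ (((β + c) * φ y + γ / 2 * (φ y) ^ 2) / α) y)
    (hnc : ¬ ∀ y z : ℝ, (φ y, ψ y) = (φ z, ψ z))
    (hφtop : Filter.Tendsto φ Filter.atTop (nhds 0))
    (hφbot : Filter.Tendsto φ Filter.atBot (nhds 0))
    (hψtop : Filter.Tendsto ψ Filter.atTop (nhds 0))
    (hψbot : Filter.Tendsto ψ Filter.atBot (nhds 0))
    (y₀ : ℝ) (hy₀ : φ y₀ = -3 * (β + c) / γ ∧ ψ y₀ = 0) :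
    (∀ y : ℝ, 0 < φ y) ∧
    StrictMonoOn φ (Set.Iio y₀) ∧
    StrictAntiOn φ (Set.Ioi y₀) := by
  obtain ⟨hφy₀, hψy₀⟩ := hy₀
  have hγ' : γ ≠ 0 := ne_of_lt hγ
  have hα' : α ≠ 0 := ne_of_gt hα
  set m : ℝ := -3 * (β + c) / γ with hm_def
  have hm : 0 < m := div_pos_of_neg_of_neg (by linarith) hγ
  have hφcont : Continuous φ := continuous_iff_continuousAt.2 fun y => (hφ y).continuousAt
  have hψcont : Continuous ψ := continuous_iff_continuousAt.2 fun y => (hψ y).continuousAt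
  -- Energy conservation
  set E : ℝ → ℝ := fun y => α * ψ y ^ 2 - (β + c) * φ y ^ 2 - γ / 3 * φ y ^ 3 with hE_def
  have hE : ∀ y, HasDerivAt E 0 y := by
    intro y
    have d1 : HasDerivAt (fun y => α * ψ y ^ 2)
        (α * (2 * ψ y ^ 1 * (((β + c) * φ y + γ / 2 * (φ y) ^ 2) / α))) y :=
      ((hψ y).pow 2).const_mul α
    have d2 : HasDerivAt (fun y => (β + c) * φ y ^ 2) ((β + c) * (2 * φ y ^ 1 * ψ y)) y :=
      ((hφ y).pow 2).const_mul (β + c)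
    have d3 : HasDerivAt (fun y => γ / 3 * φ y ^ 3) (γ / 3 * (3 * φ y ^ 2 * ψ y)) y :=
      ((hφ y).pow 3).const_mul (γ / 3)
    have := (d1.sub d2).sub d3
    convert this using 1
    · rfl
    · rfl
    · rfl
    rw [mul_div_assoc', mul_div_assoc', mul_div_cancel_left₀ _ hα']
    ring
  have hEconst : ∀ y, E y = E y₀ := by
    intro y
    exact is_const_of_deriv_eq_zero (fun x => (hE x).differentiableAt)
      (fun x => (hE x).deriv) y y₀
  have hEy₀ : E y₀ = 0 := by
    have h1 : E y₀ = -((β + c) * m ^ 2) - γ / 3 * m ^ 3 := by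
      simp [hE_def, hψy₀, hφy₀]
    rw [h1, hm_def]
    field_simp
    ring
  have energy : ∀ y, α * ψ y ^ 2 = (β + c) * φ y ^ 2 + γ / 3 * φ y ^ 3 := by
    intro y
    have := (hEconst y).trans hEy₀
    simp only [hE_def] at this
    linarith
  -- φ never vanishes
  have hne : ∀ y, φ y ≠ 0 := by
    intro y hy
    set S : Set ℝ := {z | φ z = 0} with hS_def
    have hSc : IsClosed S := isClosed_eq hφcont continuous_const
    have hSo : IsOpen S := by
      rw [isOpen_iff_mem_nhds]
      intro t₀ ht₀
      -- find δ with |φ| ≤ 1 on the closed ball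
      have h1 : ∀ᶠ z in nhds t₀, |φ z| < 1 := by
        have : Tendsto φ (nhds t₀) (nhds 0) := by
          rw [← ht₀]; exact hφcont.continuousAt
        have := this.eventually (eventually_abs_sub_lt 0 one_pos)
        simpa using this
      obtain ⟨δ, hδpos, hδ⟩ := Metric.eventually_nhds_iff_ball.1 h1
      set K : ℝ := Real.sqrt (((β + c) + |γ| / 3) / α) with hK_def
      have hK2 : K ^ 2 = ((β + c) + |γ| / 3) / α := by
        rw [hK_def, sq]
        exact Real.mul_self_sqrt (by positivity)
      have hbound : ∀ z ∈ Set.Icc (t₀ - δ / 2) (t₀ + δ / 2), |ψ z| ≤ K * |φ z| := by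
        intro z hz
        have hzball : z ∈ Metric.ball t₀ δ := by
          rw [Metric.mem_ball, Real.dist_eq]
          rw [abs_sub_lt_iff]
          constructor <;> linarith [hz.1, hz.2]
        have hφz : |φ z| < 1 := hδ z hzball
        have hsq : ψ z ^ 2 ≤ K ^ 2 * φ z ^ 2 := by
          rw [hK2]
          rw [div_mul_eq_mul_div, le_div_iff₀ hα]
          have h2 : γ / 3 * φ z ^ 3 ≤ |γ| / 3 * φ z ^ 2 := by
            have h3 : |γ / 3 * φ z ^ 3| ≤ |γ| / 3 * φ z ^ 2 := by
              rw [abs_mul, abs_div, abs_pow]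
              have hp : |φ z| ^ 3 ≤ |φ z| ^ 2 :=
                pow_le_pow_of_le_one (abs_nonneg _) hφz.le (by norm_num)
              calc |γ| / |(3:ℝ)| * |φ z| ^ 3 ≤ |γ| / |(3:ℝ)| * |φ z| ^ 2 := by
                    apply mul_le_mul_of_nonneg_left hp (by positivity)
                _ = |γ| / 3 * φ z ^ 2 := by rw [sq_abs]; norm_num
            exact (le_abs_self _).trans h3
          have := energy z
          nlinarith [sq_nonneg (φ z)]
        nlinarith [abs_nonneg (ψ z), abs_nonneg (φ z), sq_abs (ψ z), sq_abs (φ z),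
          Real.sqrt_nonneg (((β + c) + |γ| / 3) / α), mul_nonneg (Real.sqrt_nonneg (((β + c) + |γ| / 3) / α)) (abs_nonneg (φ z))]
      have hzero := gron_zero_two_sided K φ ψ hφ t₀ (δ / 2) hbound ht₀
      apply Filter.mem_of_superset (Metric.ball_mem_nhds t₀ (by positivity : (0:ℝ) < δ / 2))
      intro z hz
      apply hzero
      rw [Metric.mem_ball, Real.dist_eq, abs_sub_lt_iff] at hz
      exact ⟨by linarith [hz.1, hz.2], by linarith [hz.1, hz.2]⟩
    have hclopen : IsClopen S := ⟨hSc, hSo⟩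
    have : S = Set.univ := hclopen.eq_univ ⟨y, hy⟩
    have hy₀S : y₀ ∈ S := this ▸ Set.mem_univ y₀
    have h0 : φ y₀ = 0 := hy₀S
    rw [hφy₀] at h0
    exact absurd h0 (ne_of_gt hm)
  -- φ is everywhere positive
  have hpos : ∀ y, 0 < φ y := by
    intro y
    rcases lt_or_gt_of_ne (hne y) with hlt | hgt
    · exfalso
      have h0 : (0:ℝ) ∈ Set.uIcc (φ y) (φ y₀) := by
        rw [Set.mem_uIcc]
        left; exact ⟨hlt.le, by rw [hφy₀]; exact hm.le⟩
      obtain ⟨z, _, hz⟩ := intermediate_value_uIcc (hφcont.continuousOn) h0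
      exact hne z hz
    · exact hgt
  -- φ ≤ m everywhere
  have hle : ∀ y, φ y ≤ m := by
    intro y
    rw [hm_def, le_div_iff_of_neg hγ]
    nlinarith [energy y, mul_nonneg hα.le (sq_nonneg (ψ y)), mul_pos (hpos y) (hpos y), hpos y]
  -- ψ = 0 implies φ = m
  have hψ0 : ∀ y, ψ y = 0 → φ y = m := by
    intro y h
    have he := energy y
    rw [h] at he
    have hfac : φ y ^ 2 * ((β + c) + γ / 3 * φ y) = 0 := by nlinarith
    have h2 : (β + c) + γ / 3 * φ y = 0 := by
      rcases mul_eq_zero.1 hfac with h' | h'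
      · exact absurd h' (pow_ne_zero 2 (hne y))
      · exact h'
    rw [hm_def, eq_div_iff hγ']
    nlinarith
  -- φ = m implies ψ = 0 (local max)
  have hmax : ∀ y, φ y = m → ψ y = 0 := by
    intro y h
    have hloc : IsLocalMax φ y :=
      Filter.Eventually.of_forall fun z => (hle z).trans_eq h.symm
    exact hloc.hasDerivAt_eq_zero (hφ y)
  -- φ = m only at y₀
  have hmaux : ∀ a b : ℝ, a < b → φ a = m → φ b = m → False := by
    intro a b hab ha hb
    obtain ⟨z, hzmem, hzmin⟩ := isCompact_Icc.exists_isMinOn (Set.nonempty_Icc.2 hab.le)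
      hφcont.continuousOn
    rcases eq_or_lt_of_le (hle z) with heq | hlt'
    · -- φ ≡ m on [a,b]
      have hall : ∀ t ∈ Set.Icc a b, φ t = m := by
        intro t ht
        exact le_antisymm (hle t) (heq ▸ hzmin ht)
      set t := (a + b) / 2 with ht_def
      have htIoo : t ∈ Set.Ioo a b := ⟨by simp [ht_def]; linarith, by simp [ht_def]; linarith⟩
      have hIoo_nhds : Set.Ioo a b ∈ nhds t := Ioo_mem_nhds htIoo.1 htIoo.2
      have hψzero : ∀ t' ∈ Set.Ioo a b, ψ t' = 0 := by
        intro t' ht'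
        have hconst : φ =ᶠ[nhds t'] fun _ => m := by
          filter_upwards [Ioo_mem_nhds ht'.1 ht'.2] with u hu
          exact hall u (Set.Ioo_subset_Icc_self hu)
        have hd0 : HasDerivAt φ 0 t' := by
          have : HasDerivAt (fun _ : ℝ => m) 0 t' := hasDerivAt_const t' m
          exact this.congr_of_eventuallyEq hconst
        exact (hφ t').unique hd0
      have hψconst : ψ =ᶠ[nhds t] fun _ => 0 := by
        filter_upwards [hIoo_nhds] with u hu
        exact hψzero u hu
      have hd0 : HasDerivAt ψ 0 t := by
        have : HasDerivAt (fun _ : ℝ => (0:ℝ)) 0 t := hasDerivAt_const t 0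
        exact this.congr_of_eventuallyEq hψconst
      have huni := (hψ t).unique hd0
      have hφt : φ t = m := hall t (Set.Ioo_subset_Icc_self htIoo)
      rw [hφt] at huni
      have hnum : (β + c) * m + γ / 2 * m ^ 2 = 3 / 2 * (β + c) ^ 2 / γ := by
        rw [hm_def]; field_simp; ring
      have hneg : ((β + c) * m + γ / 2 * m ^ 2) / α < 0 := by
        apply div_neg_of_neg_of_pos _ hα
        rw [hnum]
        exact div_neg_of_pos_of_neg (by nlinarith [pow_pos hβc 2]) hγ
      rw [huni] at hneg
      exact absurd hneg (lt_irrefl 0)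
    · -- interior minimum with φ < m : contradiction
      have hza : z ≠ a := fun h => by rw [h, ha] at hlt'; exact absurd hlt' (lt_irrefl m)
      have hzb : z ≠ b := fun h => by rw [h, hb] at hlt'; exact absurd hlt' (lt_irrefl m)
      have hzIoo : z ∈ Set.Ioo a b := ⟨lt_of_le_of_ne hzmem.1 (Ne.symm hza), lt_of_le_of_ne hzmem.2 hzb⟩
      have hloc : IsLocalMin φ z := hzmin.isLocalMin (Icc_mem_nhds hzIoo.1 hzIoo.2)
      have : ψ z = 0 := hloc.hasDerivAt_eq_zero (hφ z)
      have := hψ0 z this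
      rw [this] at hlt'
      exact absurd hlt' (lt_irrefl m)
  have huniq : ∀ y, φ y = m → y = y₀ := by
    intro y h
    by_contra hne'
    rcases lt_or_gt_of_ne hne' with hlt | hgt
    · exact hmaux y y₀ hlt h hφy₀
    · exact hmaux y₀ y hgt hφy₀ h
  have hψne : ∀ y, y ≠ y₀ → ψ y ≠ 0 := fun y hy h => hy (huniq y (hψ0 y h))
  -- sign of ψ on (−∞, y₀)
  have hIio : ∀ y < y₀, 0 < ψ y := by
    by_contra hcon
    push_neg at hcon
    obtain ⟨y₁, hy₁, hy₁le⟩ := hcon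
    have hy₁neg : ψ y₁ < 0 := lt_of_le_of_ne hy₁le (hψne y₁ (ne_of_lt hy₁))
    have hall : ∀ y < y₀, ψ y < 0 := by
      intro y hy
      rcases lt_trichotomy (ψ y) 0 with h | h | h
      · exact h
      · exact absurd h (hψne y (ne_of_lt hy))
      · exfalso
        have h0 : (0:ℝ) ∈ Set.uIcc (ψ y₁) (ψ y) := by
          rw [Set.mem_uIcc]; left; exact ⟨hy₁neg.le, h.le⟩
        obtain ⟨z, hzmem, hz⟩ := intermediate_value_uIcc (hψcont.continuousOn) h0
        have hzlt : z < y₀ := by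
          rcases Set.mem_uIcc.1 hzmem with ⟨_, h2⟩ | ⟨_, h2⟩
          · exact lt_of_le_of_lt h2 hy
          · exact lt_of_le_of_lt h2 hy₁
        exact hψne z (ne_of_lt hzlt) hz
    have hanti : StrictAntiOn φ (Set.Iio y₀) := by
      apply strictAntiOn_of_deriv_neg (convex_Iio y₀) hφcont.continuousOn
      intro x hx
      rw [interior_Iio] at hx
      rw [(hφ x).deriv]
      exact hall x hx
    have hgebot : ∀ t ≤ y₀ - 2, φ (y₀ - 1) ≤ φ t := by
      intro t ht
      exact (hanti (Set.mem_Iio.2 (by linarith)) (Set.mem_Iio.2 (by linarith))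
        (by linarith)).le
    have : φ (y₀ - 1) ≤ 0 :=
      ge_of_tendsto hφbot (Filter.eventually_atBot.2 ⟨y₀ - 2, hgebot⟩)
    exact absurd this (not_le.2 (hpos (y₀ - 1)))
  -- sign of ψ on (y₀, ∞)
  have hIoi : ∀ y, y₀ < y → ψ y < 0 := by
    by_contra hcon
    push_neg at hcon
    obtain ⟨y₁, hy₁, hy₁ge⟩ := hcon
    have hy₁pos : 0 < ψ y₁ := lt_of_le_of_ne hy₁ge (Ne.symm (hψne y₁ (ne_of_gt hy₁)))
    have hall : ∀ y, y₀ < y → 0 < ψ y := by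
      intro y hy
      rcases lt_trichotomy (ψ y) 0 with h | h | h
      · exfalso
        have h0 : (0:ℝ) ∈ Set.uIcc (ψ y₁) (ψ y) := by
          rw [Set.mem_uIcc]; right; exact ⟨h.le, hy₁pos.le⟩
        obtain ⟨z, hzmem, hz⟩ := intermediate_value_uIcc (hψcont.continuousOn) h0
        have hzgt : y₀ < z := by
          rcases Set.mem_uIcc.1 hzmem with ⟨h2, _⟩ | ⟨h2, _⟩
          · exact lt_of_lt_of_le hy₁ h2
          · exact lt_of_lt_of_le hy h2
        exact hψne z (ne_of_gt hzgt) hz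
      · exact absurd h (hψne y (ne_of_gt hy))
      · exact h
    have hmono : StrictMonoOn φ (Set.Ioi y₀) := by
      apply strictMonoOn_of_deriv_pos (convex_Ioi y₀) hφcont.continuousOn
      intro x hx
      rw [interior_Ioi] at hx
      rw [(hφ x).deriv]
      exact hall x hx
    have hgetop : ∀ t, y₀ + 2 ≤ t → φ (y₀ + 1) ≤ φ t := by
      intro t ht
      exact (hmono (Set.mem_Ioi.2 (by linarith)) (Set.mem_Ioi.2 (by linarith))
        (by linarith)).le
    have : φ (y₀ + 1) ≤ 0 :=
      ge_of_tendsto hφtop (Filter.eventually_atTop.2 ⟨y₀ + 2, hgetop⟩)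
    exact absurd this (not_le.2 (hpos (y₀ + 1)))
  refine ⟨hpos, ?_, ?_⟩
  · apply strictMonoOn_of_deriv_pos (convex_Iio y₀) hφcont.continuousOn
    intro x hx
    rw [interior_Iio] at hx
    rw [(hφ x).deriv]
    exact hIio x hx
  · apply strictAntiOn_of_deriv_neg (convex_Ioi y₀) hφcont.continuousOn
    intro x hx
    rw [interior_Ioi] at hx
    rw [(hφ x).deriv]
    exact hIoi x hx
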